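/- Let q be a complex number with 0 < |q| < 1. Then ∑_{n=0}^∞ (q;q²)_n (−1)^n q^{n²+n} / (−q;q)_{2n+1} = ∑_{n=0}^∞ (−1)^n q^{n(n+1)/2}. -/

import Mathlib

open Finset Filter

/-- The finite q-shifted factorial `(a;q)_n`. -/
noncomputable def qPoch (a q : ℂ) (n : ℕ) : ℂ := ∏ j ∈ Finset.range n, (1 - a * q ^ j)

/-- The infinite q-shifted factorial `(a;q)_∞`. -/
noncomputable def qPochInf (a q : ℂ) : ℂ := ∏' j : ℕ, (1 - a * q ^ j)

noncomputable def rfT (q : ℂ) (k n : ℕ) : ℂ :=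
  qPoch q (q^2) n * (-1)^n * q^(n^2+(2*k+1)*n) / qPoch (-q^(k+1)) q (2*n+1)


noncomputable def rfE (q : ℂ) (k m : ℕ) : ℂ :=
  (-1)^m * qPoch q (q^2) m * q^(m^2+(2*k+1)*m) / qPoch (-q^(k+1)) q (2*m)


noncomputable def rfG (q : ℂ) (n : ℕ) : ℝ :=
  2^n * (‖q‖)^(n^2+n) / (1 - ‖q‖)^(2*n+1)


lemma qPoch_succ (a q : ℂ) (n : ℕ) : qPoch a q (n+1) = qPoch a q n * (1 - a * q ^ n) := by
  simp [qPoch, Finset.prod_range_succ]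


lemma one_add_ne (z : ℂ) (h : ‖z‖ < 1) : (1:ℂ) + z ≠ 0 := by
  intro hc
  have : z = -1 := by linear_combination hc
  simp [this] at h


lemma abs_pow_lt (q : ℂ) (hq1 : ‖q‖ < 1) (m : ℕ) (hm : 1 ≤ m) :
    ‖q ^ m‖ < 1 := by
  rw [norm_pow]
  exact pow_lt_one₀ (norm_nonneg q) hq1 (by omega)


lemma one_add_mul_ne (q : ℂ) (hq1 : ‖q‖ < 1) (k j : ℕ) :
    (1:ℂ) + q^(k+1) * q^j ≠ 0 := by
  have h : q^(k+1) * q^j = q^(k+1+j) := by rw [pow_add]; ring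
  rw [h]
  exact one_add_ne _ (abs_pow_lt q hq1 _ (by omega))


lemma qPochNeg_ne (q : ℂ) (hq1 : ‖q‖ < 1) (k m : ℕ) :
    qPoch (-q^(k+1)) q m ≠ 0 := by
  rw [qPoch]
  apply Finset.prod_ne_zero_iff.2
  intro j _
  have : (1:ℂ) - (-q^(k+1)) * q^j = 1 + q^(k+1) * q^j := by ring
  rw [this]
  exact one_add_mul_ne q hq1 k j


lemma qPoch_shift (q : ℂ) (k m : ℕ) :
    qPoch (-q^(k+2)) q m * (1 + q^(k+1)) = qPoch (-q^(k+1)) q (m+1) := by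
  rw [qPoch, qPoch, Finset.prod_range_succ']
  congr 1
  · apply Finset.prod_congr rfl
    intro j _
    rw [show k+2 = (k+1)+1 by ring, pow_succ (q) (k+1)]
    ring
  · ring


lemma rfStep (q : ℂ) (hq1 : ‖q‖ < 1) (k N : ℕ) :
    rfT q k N + q^(k+1) * rfT q (k+1) N = rfE q k N - rfE q k (N+1) := by
  have hD : qPoch (-q^(k+1)) q (2*N) ≠ 0 := qPochNeg_ne q hq1 k _
  have h1 : (1:ℂ) + q^(k+1) * q^(2*N) ≠ 0 := one_add_mul_ne q hq1 k _
  have h2 : (1:ℂ) + q^(k+1) * q^(2*N+1) ≠ 0 := one_add_mul_ne q hq1 k _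
  have h3 : (1:ℂ) + q^(k+1) ≠ 0 := by
    have := one_add_mul_ne q hq1 k 0; simpa using this
  have f1 : qPoch (-q^(k+1)) q (2*N+1)
      = qPoch (-q^(k+1)) q (2*N) * (1 + q^(k+1)*q^(2*N)) := by
    rw [qPoch_succ]; ring
  have f2 : qPoch (-q^(k+1)) q (2*(N+1))
      = qPoch (-q^(k+1)) q (2*N) * (1 + q^(k+1)*q^(2*N)) * (1 + q^(k+1)*q^(2*N+1)) := by
    rw [show 2*(N+1) = (2*N+1)+1 by ring, qPoch_succ, f1]; ring
  have f3' : qPoch (-q^(k+2)) q (2*N+1)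
      = qPoch (-q^(k+1)) q (2*N) * (1 + q^(k+1)*q^(2*N)) * (1 + q^(k+1)*q^(2*N+1))
        / (1 + q^(k+1)) := by
    rw [eq_div_iff h3, qPoch_shift q k (2*N+1), show 2*N+1+1 = 2*(N+1) by ring, f2]
  have f4 : qPoch q (q^2) (N+1) = qPoch q (q^2) N * (1 - q * q^(2*N)) := by
    rw [qPoch_succ]
    congr 2
    rw [← pow_mul]
  have g1 : q^(N^2+(2*(k+1)+1)*N) = q^(N^2+(2*k+1)*N) * q^(2*N) := by
    rw [← pow_add]; congr 1; ring
  have g2 : q^((N+1)^2+(2*k+1)*(N+1))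
      = q^(N^2+(2*k+1)*N) * q^(2*N) * (q^(k+1) * q^(k+1)) := by
    rw [← pow_add, ← pow_add, ← pow_add]; congr 1; ring
  have g3 : q^(2*N+1) = q^(2*N) * q := pow_succ q (2*N)
  rw [g3] at h2
  rw [rfT, rfT, rfE, rfE, show (k+1)+1 = k+2 from rfl, f1, f2, f3', f4, g1, g2, g3]
  rw [pow_succ (-1 : ℂ) N]
  set s := ((-1:ℂ))^N with hs
  set A := qPoch q (q^2) N with hA
  set D := qPoch (-q^(k+1)) q (2*N) with hDdef
  set b := q^(k+1) with hb
  set y := q^(2*N) with hy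
  set Q := q^(N^2+(2*k+1)*N) with hQ
  have h2' : 1 + b*y*q ≠ 0 := by rwa [mul_assoc]
  field_simp
  ring


lemma one_sub_abs_le (z : ℂ) : 1 - ‖z‖ ≤ ‖1 - z‖ := by
  have h := norm_add_le (1 - z) z
  simp at h
  linarith


lemma abs_sub_le' (x y : ℂ) : ‖x - y‖ ≤ ‖x‖ + ‖y‖ := by
  have := norm_sub_le x y
  simpa using this


lemma absPochNum_le (q : ℂ) (hq1 : ‖q‖ < 1) (n : ℕ) :
    ‖qPoch q (q^2) n‖ ≤ 2^n := by
  have ha0 : 0 ≤ ‖q‖ := norm_nonneg q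
  rw [qPoch, norm_prod]
  have hfac : ∀ j ∈ range n, ‖1 - q*(q^2)^j‖ ≤ 2 := by
    intro j _
    have h1 := abs_sub_le' 1 (q*(q^2)^j)
    have h2 : ‖q*(q^2)^j‖ ≤ 1 := by
      rw [norm_mul, norm_pow]
      exact mul_le_one₀ hq1.le (by positivity)
        (pow_le_one₀ (norm_nonneg _) (by rw [norm_pow]; exact pow_le_one₀ ha0 hq1.le))
    simp only [norm_one] at h1
    linarith
  have hb := Finset.prod_le_prod (f := fun j => ‖1 - q*(q^2)^j‖)
    (g := fun _ => (2:ℝ)) (fun j _ => norm_nonneg _) hfac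
  simpa using hb


lemma absPochDen_ge (q : ℂ) (hq1 : ‖q‖ < 1) (k m : ℕ) :
    (1 - ‖q‖)^m ≤ ‖qPoch (-q^(k+1)) q m‖ := by
  have ha0 : 0 ≤ ‖q‖ := norm_nonneg q
  have ha1 : (0:ℝ) ≤ 1 - ‖q‖ := by linarith
  rw [qPoch, norm_prod]
  have hfac : ∀ j ∈ range m, 1 - ‖q‖ ≤ ‖1 - (-q^(k+1))*q^j‖ := by
    intro j _
    have h1 := one_sub_abs_le ((-q^(k+1))*q^j)
    have h2 : ‖(-q^(k+1))*q^j‖ ≤ ‖q‖ := by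
      rw [norm_mul, norm_neg, norm_pow, norm_pow, ← pow_add]
      calc ‖q‖^(k+1+j) ≤ ‖q‖^1 :=
            pow_le_pow_of_le_one ha0 hq1.le (by omega)
        _ = ‖q‖ := pow_one _
    linarith
  have hb := Finset.prod_le_prod (f := fun _ => 1 - ‖q‖)
    (g := fun j => ‖1 - (-q^(k+1))*q^j‖) (fun j _ => ha1) hfac
  simpa using hb


lemma absT_le (q : ℂ) (hq1 : ‖q‖ < 1) (k n : ℕ) :
    ‖rfT q k n‖ ≤ rfG q n := by
  have ha0 : 0 ≤ ‖q‖ := norm_nonneg q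
  have ha1 : (0:ℝ) < 1 - ‖q‖ := by linarith
  rw [rfT, rfG, norm_div, norm_mul, norm_mul]
  have hsg : ‖(-1:ℂ)^n‖ = 1 := by simp
  have e2 : ‖q^(n^2+(2*k+1)*n)‖ ≤ (‖q‖)^(n^2+n) := by
    rw [norm_pow]
    apply pow_le_pow_of_le_one ha0 hq1.le
    have : n ≤ (2*k+1)*n := Nat.le_mul_of_pos_left n (by omega)
    omega
  refine div_le_div₀ (by positivity) ?_ (pow_pos ha1 _) (absPochDen_ge q hq1 k _)
  rw [hsg, mul_one]
  exact mul_le_mul (absPochNum_le q hq1 n) e2 (norm_nonneg _) (by positivity)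


lemma absE_le (q : ℂ) (hq1 : ‖q‖ < 1) (k m : ℕ) :
    ‖rfE q k m‖ ≤ rfG q m := by
  have ha0 : 0 ≤ ‖q‖ := norm_nonneg q
  have ha1 : (0:ℝ) < 1 - ‖q‖ := by linarith
  rw [rfE, rfG, norm_div, norm_mul, norm_mul]
  have hsg : ‖(-1:ℂ)^m‖ = 1 := by simp
  have e2 : ‖q^(m^2+(2*k+1)*m)‖ ≤ (‖q‖)^(m^2+m) := by
    rw [norm_pow]
    apply pow_le_pow_of_le_one ha0 hq1.le
    have : m ≤ (2*k+1)*m := Nat.le_mul_of_pos_left m (by omega)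
    omega
  have hden : (1 - ‖q‖)^(2*m+1) ≤ ‖qPoch (-q^(k+1)) q (2*m)‖ := by
    calc (1 - ‖q‖)^(2*m+1) ≤ (1 - ‖q‖)^(2*m) :=
          pow_le_pow_of_le_one ha1.le (by linarith) (by omega)
      _ ≤ _ := absPochDen_ge q hq1 k _
  refine div_le_div₀ (by positivity) ?_ (pow_pos ha1 _) hden
  rw [hsg, one_mul]
  exact mul_le_mul (absPochNum_le q hq1 m) e2 (norm_nonneg _) (by positivity)


lemma rfG_nonneg (q : ℂ) (hq1 : ‖q‖ < 1) (n : ℕ) : 0 ≤ rfG q n := by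
  have ha0 : 0 ≤ ‖q‖ := norm_nonneg q
  have ha1 : (0:ℝ) < 1 - ‖q‖ := by linarith
  rw [rfG]; positivity


lemma rfG_summable (q : ℂ) (hq1 : ‖q‖ < 1) : Summable (rfG q) := by
  have ha0 : 0 ≤ ‖q‖ := norm_nonneg q
  have ha1 : (0:ℝ) < 1 - ‖q‖ := by linarith
  apply summable_of_ratio_norm_eventually_le (r := 1/2) (by norm_num)
  have hev : ∀ᶠ n : ℕ in atTop, (‖q‖)^n ≤ (1 - ‖q‖)^2/8 := by
    have ht := tendsto_pow_atTop_nhds_zero_of_lt_one ha0 hq1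
    have h8 : (0:ℝ) < (1 - ‖q‖)^2/8 := by positivity
    exact ht.eventually (eventually_le_nhds h8)
  filter_upwards [hev] with n hn
  have hrec : rfG q (n+1) = rfG q n * (2 * (‖q‖)^(2*n+2) / (1 - ‖q‖)^2) := by
    rw [rfG, rfG, show (n+1)^2+(n+1) = (n^2+n)+(2*n+2) by ring,
      pow_add (‖q‖) (n^2+n) (2*n+2),
      show 2*(n+1)+1 = (2*n+1)+2 by ring, pow_add (1 - ‖q‖) (2*n+1) 2,
      pow_succ 2 n]
    field_simp
  have hb : (‖q‖)^(2*n+2) ≤ (‖q‖)^n :=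
    pow_le_pow_of_le_one ha0 hq1.le (by omega)
  have hGn : 0 ≤ rfG q n := rfG_nonneg q hq1 n
  rw [Real.norm_of_nonneg (rfG_nonneg q hq1 (n+1)), Real.norm_of_nonneg hGn, hrec]
  have hr : 2 * (‖q‖)^(2*n+2) / (1 - ‖q‖)^2 ≤ 1/2 := by
    rw [div_le_iff₀ (by positivity)]
    nlinarith
  nlinarith


lemma rfT_summable (q : ℂ) (hq1 : ‖q‖ < 1) (k : ℕ) : Summable (rfT q k) :=
  Summable.of_norm (Summable.of_nonneg_of_le (fun n => norm_nonneg _)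
    (fun n => by exact absT_le q hq1 k n) (rfG_summable q hq1))


lemma absU_le (q : ℂ) (hq1 : ‖q‖ < 1) (k : ℕ) :
    ‖∑' n, rfT q k n‖ ≤ ∑' n, rfG q n := by
  have h1 : Summable (fun n => ‖rfT q k n‖) :=
    Summable.of_nonneg_of_le (fun n => norm_nonneg _)
      (fun n => by exact absT_le q hq1 k n) (rfG_summable q hq1)
  calc ‖∑' n, rfT q k n‖ = ‖∑' n, rfT q k n‖ := rfl
    _ ≤ ∑' n, ‖rfT q k n‖ := norm_tsum_le_tsum_norm h1
    _ ≤ ∑' n, rfG q n := by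
        apply Summable.tsum_le_tsum _ h1 (rfG_summable q hq1)
        intro n
        exact absT_le q hq1 k n


lemma rfE_tendsto (q : ℂ) (hq1 : ‖q‖ < 1) (k : ℕ) :
    Tendsto (fun N => rfE q k N) atTop (nhds 0) := by
  have hbd : ∀ N, ‖rfE q k N‖ ≤ rfG q N := by
    intro N
    exact absE_le q hq1 k N
  exact squeeze_zero_norm hbd (rfG_summable q hq1).tendsto_atTop_zero


lemma rfE_zero (q : ℂ) (k : ℕ) : rfE q k 0 = 1 := by
  simp [rfE, qPoch]


lemma rfSum (q : ℂ) (hq1 : ‖q‖ < 1) (k N : ℕ) :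
    ∑ n ∈ range N, (rfT q k n + q^(k+1) * rfT q (k+1) n) = 1 - rfE q k N := by
  induction N with
  | zero => simp [rfE_zero]
  | succ N ih => rw [Finset.sum_range_succ, ih, rfStep q hq1 k N]; ring


lemma rfRec (q : ℂ) (hq1 : ‖q‖ < 1) (k : ℕ) :
    (∑' n, rfT q k n) = 1 - q^(k+1) * ∑' n, rfT q (k+1) n := by
  have hs1 := rfT_summable q hq1 k
  have hs2 := rfT_summable q hq1 (k+1)
  have h1 : HasSum (fun n => rfT q k n + q^(k+1) * rfT q (k+1) n)
      ((∑' n, rfT q k n) + q^(k+1) * ∑' n, rfT q (k+1) n) :=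
    hs1.hasSum.add ((hs2.hasSum.mul_left (q^(k+1))))
  have hA := h1.tendsto_sum_nat
  have heq : (fun N => ∑ n ∈ range N, (rfT q k n + q^(k+1) * rfT q (k+1) n))
      = fun N => 1 - rfE q k N := funext (rfSum q hq1 k)
  rw [heq] at hA
  have hB : Tendsto (fun N => 1 - rfE q k N) atTop (nhds (1 - 0)) :=
    tendsto_const_nhds.sub (rfE_tendsto q hq1 k)
  have h2 := tendsto_nhds_unique hA hB
  linear_combination h2


lemma tri_succ (n : ℕ) : (n+1)*((n+1)+1)/2 = n*(n+1)/2 + (n+1) := by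
  have h : (n+1)*((n+1)+1) = n*(n+1) + 2*(n+1) := by ring
  rw [h, Nat.add_mul_div_left _ _ (by norm_num : 0 < 2)]


lemma tri_ge (n : ℕ) : n ≤ n*(n+1)/2 := by
  induction n with
  | zero => simp
  | succ n ih => rw [tri_succ]; omega


lemma rfIter (q : ℂ) (hq1 : ‖q‖ < 1) (N : ℕ) :
    (∑' n, rfT q 0 n) = (∑ n ∈ range N, (-1)^n * q^(n*(n+1)/2))
      + (-1)^N * q^(N*(N+1)/2) * ∑' n, rfT q N n := by
  induction N with
  | zero => simp
  | succ N ih =>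
      rw [ih, rfRec q hq1 N, Finset.sum_range_succ]
      have he : q^(N*(N+1)/2) * q^(N+1) = q^((N+1)*((N+1)+1)/2) := by
        rw [← pow_add, tri_succ]
      rw [pow_succ (-1:ℂ) N, ← he]
      ring



/-- A false theta function identity of Ramanujan (Lost Notebook, p. 13). -/
theorem ramanujan_false_theta (q : ℂ) (hq0 : 0 < ‖q‖) (hq1 : ‖q‖ < 1) :
    ∑' n : ℕ, qPoch q (q ^ 2) n * (-1) ^ n * q ^ (n ^ 2 + n) / qPoch (-q) q (2 * n + 1)
    = ∑' n : ℕ, (-1) ^ n * q ^ (n * (n + 1) / 2) := by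
  have ha0 : 0 ≤ ‖q‖ := norm_nonneg q
  have hL : (∑' n : ℕ, qPoch q (q ^ 2) n * (-1) ^ n * q ^ (n ^ 2 + n)
      / qPoch (-q) q (2 * n + 1)) = ∑' n, rfT q 0 n := by
    apply tsum_congr
    intro n
    rw [rfT]
    norm_num
  rw [hL]
  -- summability of the partial theta series
  have hb : Summable (fun n : ℕ => (-1:ℂ)^n * q^(n*(n+1)/2)) := by
    apply Summable.of_norm
    apply Summable.of_nonneg_of_le (fun n => norm_nonneg _) _
      (summable_geometric_of_lt_one ha0 hq1)
    intro n
    rw [norm_mul, norm_pow, norm_pow]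
    simp only [norm_neg, norm_one, one_pow, one_mul]
    exact pow_le_pow_of_le_one ha0 hq1.le (tri_ge n)
  -- the error term tends to zero
  have herr : Tendsto (fun N : ℕ => (-1:ℂ)^N * q^(N*(N+1)/2) * ∑' n, rfT q N n)
      atTop (nhds 0) := by
    have hbd : ∀ N : ℕ, ‖(-1:ℂ)^N * q^(N*(N+1)/2) * ∑' n, rfT q N n‖
        ≤ (‖q‖)^N * ∑' n, rfG q n := by
      intro N
      rw [norm_mul, norm_mul, norm_pow, norm_pow]
      simp only [norm_neg, norm_one, one_pow, one_mul]
      apply mul_le_mul _ (absU_le q hq1 N) (norm_nonneg _) (by positivity)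
      exact pow_le_pow_of_le_one ha0 hq1.le (tri_ge N)
    have h0 : Tendsto (fun N : ℕ => (‖q‖)^N * ∑' n, rfG q n) atTop (nhds 0) := by
      have := (tendsto_pow_atTop_nhds_zero_of_lt_one ha0 hq1).mul_const (∑' n, rfG q n)
      simpa using this
    exact squeeze_zero_norm hbd h0
  -- partial sums converge to u 0
  have hA : Tendsto (fun N : ℕ => ∑ n ∈ range N, (-1:ℂ)^n * q^(n*(n+1)/2))
      atTop (nhds (∑' n, rfT q 0 n)) := by
    have heq : (fun N : ℕ => ∑ n ∈ range N, (-1:ℂ)^n * q^(n*(n+1)/2))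
        = fun N => (∑' n, rfT q 0 n) - (-1)^N * q^(N*(N+1)/2) * ∑' n, rfT q N n := by
      funext N
      have := rfIter q hq1 N
      linear_combination -this
    rw [heq]
    have := tendsto_const_nhds (x := (∑' n, rfT q 0 n)) (f := atTop (α := ℕ)) |>.sub herr
    simpa using this
  exact (tendsto_nhds_unique hb.hasSum.tendsto_sum_nat hA).symm
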